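/- Let (Ω, ℱ, P) be a probability space, S and T measurable spaces, ρ a probability measure on S, μ a probability measure on T, and φ : S × T → ℝ a bounded measurable function. Let N, K ≥ 1, let X_1, …, X_N be random variables with values in S each with law ρ, let (W_{ik})_{1≤i≤N, 1≤k≤K} be random variables with values in T each with law μ, and assume the whole family (X_1, …, X_N) together with all W_{ik} is mutually independent. Define m_θ(s) = ∫_T φ(s,t) dμ(t) and v(s) = ∫_T φ(s,t)² dμ(t) − m_θ(s)². Then Var[ (1/(NK)) ∑_{i=1}^N ∑_{k=1}^K φ(X_i, W_{ik}) ] = (1/(NK)) · ∫_S v(s) dρ(s) + (1/N) · Var_ρ[m_θ]. -/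

import Mathlib

open MeasureTheory ProbabilityTheory

universe u

lemma integrable_of_bdd' {Ω : Type*} [MeasurableSpace Ω] {P : Measure Ω} [IsFiniteMeasure P]
    {f : Ω → ℝ} (hf : Measurable f) {M : ℝ} (h : ∀ ω, |f ω| ≤ M) : Integrable f P :=
  (memLp_top_of_bound hf.aestronglyMeasurable M
    (Filter.Eventually.of_forall (by simpa [Real.norm_eq_abs] using h))).integrable le_top

lemma sum_ite_const' {n : ℕ} (k : Fin n) (a b : ℝ) :
    ∑ l : Fin n, (if k = l then a else b) = a + ((n : ℝ) - 1) * b := by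
  have h : ∀ l : Fin n, (if k = l then a else b) = (if k = l then a - b else 0) + b := by
    intro l; split <;> ring
  rw [Finset.sum_congr rfl fun l _ => h l, Finset.sum_add_distrib, Finset.sum_ite_eq,
    if_pos (Finset.mem_univ k), Finset.sum_const, Finset.card_univ, Fintype.card_fin,
    nsmul_eq_mul]
  ring

/-- Variance of the Monte Carlo estimator
`Î₃ = (1/(NK)) ∑_i ∑_k φ(X_i, W_{ik})` in which each sample `X_i ∼ ρ` has its own
independent samples `W_{ik} ∼ μ`, the whole family being mutually independent. -/
theorem stmt_13 {Ω : Type*} {S T : Type u}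
    [MeasurableSpace Ω] [MeasurableSpace S] [MeasurableSpace T]
    (P : Measure Ω) [IsProbabilityMeasure P]
    (ρ : Measure S) [IsProbabilityMeasure ρ]
    (μ : Measure T) [IsProbabilityMeasure μ]
    (φ : S × T → ℝ) (hφ_meas : Measurable φ) (hφ_bdd : ∃ M : ℝ, ∀ p, |φ p| ≤ M)
    (N K : ℕ) (hN : 1 ≤ N) (hK : 1 ≤ K)
    (X : Fin N → Ω → S) (W : Fin N × Fin K → Ω → T)
    (hX : ∀ i, Measurable (X i) ∧ Measure.map (X i) P = ρ)
    (hW : ∀ ik, Measurable (W ik) ∧ Measure.map (W ik) P = μ)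
    (hindep : iIndepFun (m :=
      fun i : Fin N ⊕ (Fin N × Fin K) =>
        Sum.rec (motive := fun i => MeasurableSpace (Sum.elim (fun _ => S) (fun _ => T) i))
          (fun _ => (inferInstance : MeasurableSpace S))
          (fun _ => (inferInstance : MeasurableSpace T)) i)
      (fun i => Sum.rec (motive := fun i => Ω → Sum.elim (fun _ => S) (fun _ => T) i)
        X W i) P)
    (mθ : S → ℝ) (hmθ : ∀ s, mθ s = ∫ t, φ (s, t) ∂μ)
    (v : S → ℝ) (hv : ∀ s, v s = (∫ t, (φ (s, t)) ^ 2 ∂μ) - (mθ s) ^ 2) :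
    (∫ ω, ((1 / ((N : ℝ) * (K : ℝ))) * ∑ i : Fin N, ∑ k : Fin K, φ (X i ω, W (i, k) ω)) ^ 2 ∂P)
      - (∫ ω, (1 / ((N : ℝ) * (K : ℝ))) * ∑ i : Fin N, ∑ k : Fin K, φ (X i ω, W (i, k) ω) ∂P) ^ 2
    = (1 / ((N : ℝ) * (K : ℝ))) * (∫ s, v s ∂ρ)
      + (1 / (N : ℝ)) * ((∫ s, (mθ s) ^ 2 ∂ρ) - (∫ s, mθ s ∂ρ) ^ 2) := by
  classical
  obtain ⟨M0, hM0'⟩ := hφ_bdd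
  set M : ℝ := max M0 0 with hMdef
  have hM : ∀ p, |φ p| ≤ M := fun p => le_trans (hM0' p) (le_max_left _ _)
  have hM0 : 0 ≤ M := le_max_right _ _
  -- measurability of the whole indexed family
  have hFmeas : ∀ j : Fin N ⊕ (Fin N × Fin K),
      @Measurable Ω (Sum.elim (fun _ => S) (fun _ => T) j) _
        (Sum.rec (motive := fun i => MeasurableSpace (Sum.elim (fun _ => S) (fun _ => T) i))
          (fun _ => (inferInstance : MeasurableSpace S))
          (fun _ => (inferInstance : MeasurableSpace T)) j)
        ((fun i => Sum.rec (motive := fun i => Ω → Sum.elim (fun _ => S) (fun _ => T) i)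
          X W i) j) := by
    rintro (j | p)
    · exact (hX j).1
    · exact (hW p).1
  -- pairwise independence facts
  have hXW : ∀ (i : Fin N) (p : Fin N × Fin K), IndepFun (X i) (W p) P := fun i p =>
    hindep.indepFun (show (Sum.inl i : Fin N ⊕ (Fin N × Fin K)) ≠ Sum.inr p by simp)
  have hpairlaw : ∀ (i : Fin N) (p : Fin N × Fin K),
      Measure.map (fun ω => (X i ω, W p ω)) P = ρ.prod μ := by
    intro i p
    rw [← (hX i).2, ← (hW p).2]
    exact (indepFun_iff_map_prod_eq_prod_map_map (hX i).1.aemeasurable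
      (hW p).1.aemeasurable).mp (hXW i p)
  have hWWindep : ∀ (i : Fin N) (k l : Fin K), k ≠ l →
      IndepFun (W (i, k)) (W (i, l)) P := fun i k l hkl =>
    hindep.indepFun (show (Sum.inr (i, k) : Fin N ⊕ (Fin N × Fin K)) ≠ Sum.inr (i, l) by
      simp [Prod.ext_iff, hkl])
  have htriplelaw : ∀ (i : Fin N) (k l : Fin K), k ≠ l →
      Measure.map (fun ω => (X i ω, (W (i, k) ω, W (i, l) ω))) P = ρ.prod (μ.prod μ) := by
    intro i k l hkl
    have hWWmeas : Measurable (fun ω => (W (i, k) ω, W (i, l) ω)) :=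
      (hW _).1.prodMk (hW _).1
    have hWWlaw : Measure.map (fun ω => (W (i, k) ω, W (i, l) ω)) P = μ.prod μ := by
      have h := (indepFun_iff_map_prod_eq_prod_map_map (hW (i, k)).1.aemeasurable
        (hW (i, l)).1.aemeasurable).mp (hWWindep i k l hkl)
      rw [(hW (i, k)).2, (hW (i, l)).2] at h
      exact h
    have hXp : IndepFun (X i) (fun ω => (W (i, k) ω, W (i, l) ω)) P :=
      (hindep.indepFun_prodMk hFmeas (Sum.inr (i, k)) (Sum.inr (i, l)) (Sum.inl i)
        (by simp) (by simp)).symm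
    rw [← (hX i).2, ← hWWlaw]
    exact (indepFun_iff_map_prod_eq_prod_map_map (hX i).1.aemeasurable
      hWWmeas.aemeasurable).mp hXp
  have hZZindep : ∀ (i j : Fin N) (k l : Fin K), i ≠ j →
      IndepFun (fun ω => (X i ω, W (i, k) ω)) (fun ω => (X j ω, W (j, l) ω)) P := by
    intro i j k l hij
    exact hindep.indepFun_prodMk_prodMk hFmeas (Sum.inl i) (Sum.inr (i, k))
      (Sum.inl j) (Sum.inr (j, l)) (by simp [hij]) (by simp) (by simp)
      (by simp [Prod.ext_iff, hij])
  -- abbreviations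
  set Ibar : ℝ := ∫ s, mθ s ∂ρ with hIbar
  set B : ℝ := ∫ s, (mθ s) ^ 2 ∂ρ with hB
  set Vint : ℝ := ∫ s, v s ∂ρ with hVint
  -- measurability and boundedness of mθ and v
  have hmθ_eq : mθ = fun s => ∫ t, φ (s, t) ∂μ := funext hmθ
  have hmθ_meas : Measurable mθ := by
    rw [hmθ_eq]; exact (hφ_meas.stronglyMeasurable.integral_prod_right' (ν := μ)).measurable
  have hmθ_bdd : ∀ s, |mθ s| ≤ M := by
    intro s
    rw [hmθ]
    calc |∫ t, φ (s, t) ∂μ| ≤ M * (μ Set.univ).toReal := by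
          simpa [Real.norm_eq_abs] using norm_integral_le_of_norm_le_const
            (μ := μ) (f := fun t => φ (s, t)) (C := M)
            (Filter.Eventually.of_forall fun t => by simpa [Real.norm_eq_abs] using hM (s, t))
      _ = M := by simp
  have hφsq_meas : Measurable (fun z : S × T => (φ z) ^ 2) := hφ_meas.pow_const 2
  have hφsq_bdd : ∀ z : S × T, |(φ z) ^ 2| ≤ M ^ 2 := by
    intro z
    rw [abs_pow]
    exact pow_le_pow_left₀ (abs_nonneg _) (hM z) 2
  have hsm_meas : Measurable (fun s => ∫ t, (φ (s, t)) ^ 2 ∂μ) :=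
    (hφsq_meas.stronglyMeasurable.integral_prod_right' (ν := μ)).measurable
  have hsm_bdd : ∀ s, |∫ t, (φ (s, t)) ^ 2 ∂μ| ≤ M ^ 2 := by
    intro s
    calc |∫ t, (φ (s, t)) ^ 2 ∂μ| ≤ M ^ 2 * (μ Set.univ).toReal := by
          simpa [Real.norm_eq_abs] using norm_integral_le_of_norm_le_const
            (μ := μ) (f := fun t => (φ (s, t)) ^ 2) (C := M ^ 2)
            (Filter.Eventually.of_forall fun t => by
              simpa [Real.norm_eq_abs] using hφsq_bdd (s, t))
      _ = M ^ 2 := by simp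
  have hv_meas : Measurable v := by
    have : v = fun s => (∫ t, (φ (s, t)) ^ 2 ∂μ) - (mθ s) ^ 2 := funext hv
    rw [this]; exact hsm_meas.sub (hmθ_meas.pow_const 2)
  have hmθsq_bdd : ∀ s, |(mθ s) ^ 2| ≤ M ^ 2 := by
    intro s; rw [abs_pow]; exact pow_le_pow_left₀ (abs_nonneg _) (hmθ_bdd s) 2
  have hv_bdd : ∀ s, |v s| ≤ M ^ 2 + M ^ 2 := by
    intro s
    rw [hv]
    exact (abs_sub _ _).trans (add_le_add (hsm_bdd s) (hmθsq_bdd s))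
  -- integrability over ρ
  have hmθ_int : Integrable mθ ρ := integrable_of_bdd' hmθ_meas hmθ_bdd
  have hmθsq_int : Integrable (fun s => (mθ s) ^ 2) ρ :=
    integrable_of_bdd' (hmθ_meas.pow_const 2) hmθsq_bdd
  have hv_int : Integrable v ρ := integrable_of_bdd' hv_meas hv_bdd
  -- integrability over product measures
  have hφ_int : Integrable φ (ρ.prod μ) := integrable_of_bdd' hφ_meas hM
  have hφsq_int : Integrable (fun z : S × T => (φ z) ^ 2) (ρ.prod μ) :=
    integrable_of_bdd' hφsq_meas hφsq_bdd
  -- first moment of each term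
  have hE1 : ∀ (i : Fin N) (p : Fin N × Fin K), ∫ ω, φ (X i ω, W p ω) ∂P = Ibar := by
    intro i p
    have h1 : ∫ ω, φ (X i ω, W p ω) ∂P = ∫ z, φ z ∂(ρ.prod μ) := by
      rw [← hpairlaw i p,
        integral_map ((hX i).1.prodMk (hW p).1).aemeasurable hφ_meas.aestronglyMeasurable]
    rw [h1, integral_prod _ hφ_int, hIbar, hmθ_eq]
  -- second moment of each term (diagonal)
  have hEdiag : ∀ (i : Fin N) (p : Fin N × Fin K),
      ∫ ω, φ (X i ω, W p ω) * φ (X i ω, W p ω) ∂P = Vint + B := by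
    intro i p
    have h1 : ∫ ω, φ (X i ω, W p ω) * φ (X i ω, W p ω) ∂P
        = ∫ z, (φ z) ^ 2 ∂(ρ.prod μ) := by
      rw [← hpairlaw i p,
        integral_map ((hX i).1.prodMk (hW p).1).aemeasurable
          hφsq_meas.aestronglyMeasurable]
      simp [pow_two]
    rw [h1, integral_prod _ hφsq_int]
    have h2 : ∀ s, (∫ t, (φ (s, t)) ^ 2 ∂μ) = v s + (mθ s) ^ 2 := by
      intro s; rw [hv]; ring
    rw [integral_congr_ae (Filter.Eventually.of_forall h2),
      integral_add hv_int hmθsq_int]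
  -- same X, different W
  have hE2 : ∀ (i : Fin N) (k l : Fin K), k ≠ l →
      ∫ ω, φ (X i ω, W (i, k) ω) * φ (X i ω, W (i, l) ω) ∂P = B := by
    intro i k l hkl
    have hgmeas : Measurable (fun z : S × (T × T) => φ (z.1, z.2.1) * φ (z.1, z.2.2)) := by
      exact (hφ_meas.comp (measurable_fst.prodMk (measurable_fst.comp measurable_snd))).mul
        (hφ_meas.comp (measurable_fst.prodMk (measurable_snd.comp measurable_snd)))
    have hgbdd : ∀ z : S × (T × T), |φ (z.1, z.2.1) * φ (z.1, z.2.2)| ≤ M * M := by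
      intro z
      rw [abs_mul]
      exact mul_le_mul (hM _) (hM _) (abs_nonneg _) hM0
    have hgint : Integrable (fun z : S × (T × T) => φ (z.1, z.2.1) * φ (z.1, z.2.2))
        (ρ.prod (μ.prod μ)) := integrable_of_bdd' hgmeas hgbdd
    have h1 : ∫ ω, φ (X i ω, W (i, k) ω) * φ (X i ω, W (i, l) ω) ∂P
        = ∫ z : S × (T × T), φ (z.1, z.2.1) * φ (z.1, z.2.2) ∂(ρ.prod (μ.prod μ)) := by
      rw [← htriplelaw i k l hkl,
        integral_map ((hX i).1.prodMk ((hW _).1.prodMk (hW _).1)).aemeasurable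
          hgmeas.aestronglyMeasurable]
    rw [h1, integral_prod _ hgint]
    have h2 : ∀ s, (∫ p : T × T, φ (s, p.1) * φ (s, p.2) ∂(μ.prod μ)) = (mθ s) ^ 2 := by
      intro s
      rw [integral_prod_mul (f := fun t => φ (s, t)) (g := fun t => φ (s, t)), hmθ, sq]
    rw [integral_congr_ae (Filter.Eventually.of_forall h2)]
  -- different X
  have hE3 : ∀ (i j : Fin N) (k l : Fin K), i ≠ j →
      ∫ ω, φ (X i ω, W (i, k) ω) * φ (X j ω, W (j, l) ω) ∂P = Ibar ^ 2 := by
    intro i j k l hij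
    have hYY : IndepFun (fun ω => φ (X i ω, W (i, k) ω)) (fun ω => φ (X j ω, W (j, l) ω)) P :=
      (hZZindep i j k l hij).comp hφ_meas hφ_meas
    have hYint1 : Integrable (fun ω => φ (X i ω, W (i, k) ω)) P :=
      integrable_of_bdd' (hφ_meas.comp ((hX i).1.prodMk (hW _).1)) (fun ω => hM _)
    have hYint2 : Integrable (fun ω => φ (X j ω, W (j, l) ω)) P :=
      integrable_of_bdd' (hφ_meas.comp ((hX j).1.prodMk (hW _).1)) (fun ω => hM _)
    have h := hYY.integral_fun_mul_eq_mul_integral hYint1.aestronglyMeasurable hYint2.aestronglyMeasurable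
    rw [hE1 i (i, k), hE1 j (j, l)] at h
    rw [sq]
    exact h
  -- the summands
  set Y : Fin N × Fin K → Ω → ℝ := fun p ω => φ (X p.1 ω, W p ω) with hYdef
  have hYmeas : ∀ p, Measurable (Y p) := fun p => hφ_meas.comp ((hX p.1).1.prodMk (hW p).1)
  have hYint : ∀ p, Integrable (Y p) P := fun p =>
    integrable_of_bdd' (hYmeas p) (fun ω => hM _)
  have hYYint : ∀ p q, Integrable (fun ω => Y p ω * Y q ω) P := fun p q =>
    integrable_of_bdd' ((hYmeas p).mul (hYmeas q)) (M := M * M) (fun ω => by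
      rw [abs_mul]; exact mul_le_mul (hM _) (hM _) (abs_nonneg _) hM0)
  have hom4 : ∀ (i j : Fin N) (k l : Fin K), ∫ ω, Y (i, k) ω * Y (j, l) ω ∂P
      = if i = j then (if k = l then Vint + B else B) else Ibar ^ 2 := by
    intro i j k l
    by_cases hij : i = j
    · subst hij
      by_cases hkl : k = l
      · subst hkl; simpa using hEdiag i (i, k)
      · simpa [hkl] using hE2 i k l hkl
    · simpa [hij] using hE3 i j k l hij
  -- rewrite the double sum as a sum over a product type
  have hswap : ∀ ω : Ω, (∑ i : Fin N, ∑ k : Fin K, φ (X i ω, W (i, k) ω))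
      = ∑ p : Fin N × Fin K, Y p ω := fun ω =>
    (Fintype.sum_prod_type (f := fun p : Fin N × Fin K => Y p ω)).symm
  -- the mean
  have hmean : ∫ ω, (∑ p : Fin N × Fin K, Y p ω) ∂P = ((N : ℝ) * K) * Ibar := by
    rw [integral_finset_sum _ fun p _ => hYint p]
    have h : ∀ p : Fin N × Fin K, ∫ ω, Y p ω ∂P = Ibar := fun p => hE1 p.1 p
    simp only [h]
    rw [Finset.sum_const, Finset.card_univ, Fintype.card_prod, Fintype.card_fin,
      Fintype.card_fin, nsmul_eq_mul, Nat.cast_mul]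
  -- second moment
  have hsecond : ∫ ω, (∑ p : Fin N × Fin K, Y p ω) ^ 2 ∂P
      = (N : ℝ) * K * ((Vint + B) + ((K : ℝ) - 1) * B
          + ((N : ℝ) - 1) * ((K : ℝ) * Ibar ^ 2)) := by
    have hsum2 : ∀ ω : Ω, (∑ p : Fin N × Fin K, Y p ω) ^ 2
        = ∑ p : Fin N × Fin K, ∑ q : Fin N × Fin K, Y p ω * Y q ω := by
      intro ω; rw [sq, Finset.sum_mul_sum]
    simp only [hsum2]
    rw [integral_finset_sum _ fun p _ => integrable_finset_sum _ fun q _ => hYYint p q]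
    have h1 : ∀ p : Fin N × Fin K, ∫ ω, (∑ q : Fin N × Fin K, Y p ω * Y q ω) ∂P
        = ∑ q : Fin N × Fin K, ∫ ω, Y p ω * Y q ω ∂P := fun p =>
      integral_finset_sum _ fun q _ => hYYint p q
    simp only [h1]
    simp only [Fintype.sum_prod_type]
    simp only [hom4]
    have h2 : ∀ (i j : Fin N) (k : Fin K),
        (∑ l : Fin K, if i = j then (if k = l then Vint + B else B) else Ibar ^ 2)
        = if i = j then ((Vint + B) + ((K : ℝ) - 1) * B) else (K : ℝ) * Ibar ^ 2 := by
      intro i j k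
      by_cases hij : i = j
      · simp only [hij, if_true, sum_ite_const']
      · simp [hij, Finset.sum_const, Finset.card_univ, mul_comm]
    simp only [h2, sum_ite_const']
    rw [Finset.sum_const, Finset.card_univ, Fintype.card_fin, nsmul_eq_mul]
    rw [Finset.sum_const, Finset.card_univ, Fintype.card_fin, nsmul_eq_mul]
    ring
  -- put everything together
  have hNne : (N : ℝ) ≠ 0 := Nat.cast_ne_zero.mpr (by omega)
  have hKne : (K : ℝ) ≠ 0 := Nat.cast_ne_zero.mpr (by omega)
  simp only [hswap, mul_pow]
  rw [integral_const_mul, integral_const_mul, hmean, hsecond]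
  field_simp
  ring
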